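/- arXiv:1502.07616 — 2 statements merged into one kernel-verified Lean document; each statement's English description precedes it below -/
import Mathlib

section
/- There exists a constant K > 1 such that for every f ∈ L¹([0,1]) (with respect to Lebesgue measure), the function f∘T belongs to L¹([0,1]) and ‖f∘T‖_{L¹} ≤ K ‖f‖_{L¹}. -/
open MeasureTheory
open scoped ENNReal NNReal

/-- The Gauss map `T(x) = 1/x − ⌊1/x⌋` for `x ≠ 0`, `T(0) = 0`. -/
noncomputable def gaussMap (x : ℝ) : ℝ := if x = 0 then 0 else Int.fract (1 / x)

open Set Real

lemma gaussMap_measurable : Measurable gaussMap := by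
  unfold gaussMap
  exact Measurable.ite (measurableSet_singleton 0) measurable_const
    (measurable_fract.comp (measurable_const.div measurable_id))

/-- Change-of-variables bound on one branch. -/
lemma gauss_branch_bound (s : Set ℝ) (hs : MeasurableSet s) (n : ℕ) (hn : 1 ≤ n) :
    volume ((fun u : ℝ => (u + (n : ℝ))⁻¹) '' (s ∩ Ioo 0 1)) ≤
      ENNReal.ofReal (((n : ℝ) ^ 2)⁻¹) * volume (s ∩ Ioo 0 1) := by
  set A := s ∩ Ioo (0:ℝ) 1 with hA_def
  have hA : MeasurableSet A := hs.inter measurableSet_Ioo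
  have hnpos : (0:ℝ) < n := by exact_mod_cast hn
  have hderiv : ∀ u ∈ A, HasFDerivWithinAt (fun u : ℝ => (u + (n : ℝ))⁻¹)
      (ContinuousLinearMap.smulRight (1 : ℝ →L[ℝ] ℝ) (-(((u + (n : ℝ)) ^ 2)⁻¹))) A u := by
    intro u hu
    have hu0 : 0 < u := hu.2.1
    have h0 : u + (n : ℝ) ≠ 0 := by positivity
    have h : HasDerivAt (fun u : ℝ => (u + (n : ℝ))⁻¹) (-1 / (u + (n : ℝ)) ^ 2) u := by
      simpa [Pi.inv_def] using ((hasDerivAt_id u).add_const (n : ℝ)).inv h0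
    have h' : HasDerivAt (fun u : ℝ => (u + (n : ℝ))⁻¹) (-(((u + (n : ℝ)) ^ 2)⁻¹)) u := by
      convert h using 1; field_simp
    exact h'.hasDerivWithinAt.hasFDerivWithinAt
  calc volume ((fun u : ℝ => (u + (n : ℝ))⁻¹) '' A)
      ≤ ∫⁻ u in A, ENNReal.ofReal
          |(ContinuousLinearMap.smulRight (1 : ℝ →L[ℝ] ℝ)
            (-(((u + (n : ℝ)) ^ 2)⁻¹))).det| :=
        addHaar_image_le_lintegral_abs_det_fderiv volume hA hderiv
    _ ≤ ∫⁻ _ in A, ENNReal.ofReal (((n : ℝ) ^ 2)⁻¹) := by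
        refine setLIntegral_mono' hA fun u hu => ?_
        have hu0 : 0 < u := hu.2.1
        rw [ContinuousLinearMap.smulRight_one_eq_toSpanSingleton, ContinuousLinearMap.det_toSpanSingleton]
        refine ENNReal.ofReal_le_ofReal ?_
        rw [abs_neg, abs_inv, abs_of_nonneg (by positivity : (0:ℝ) ≤ (u + n) ^ 2)]
        refine inv_anti₀ (by positivity) ?_
        nlinarith
    _ = ENNReal.ofReal (((n : ℝ) ^ 2)⁻¹) * volume A := by
        rw [setLIntegral_const]

lemma gauss_preimage_bound (s : Set ℝ) (hs : MeasurableSet s) :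
    volume (gaussMap ⁻¹' s ∩ Icc 0 1) ≤
      ENNReal.ofReal (π ^ 2 / 6) * volume (s ∩ Icc (0:ℝ) 1) := by
  classical
  set N : Set ℝ := {0} ∪ Set.range (fun k : ℕ => ((k : ℝ) + 1)⁻¹) with hN_def
  have hNcount : N.Countable :=
    (Set.countable_singleton 0).union (Set.countable_range _)
  have hNnull : volume N = 0 := hNcount.measure_zero _
  -- covering
  have hcover : gaussMap ⁻¹' s ∩ Icc 0 1 ⊆
      N ∪ ⋃ k : ℕ, (gaussMap ⁻¹' s ∩ Ioo ((k : ℝ) + 2)⁻¹ ((k : ℝ) + 1)⁻¹) := by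
    rintro x ⟨hxs, hx0, hx1⟩
    rcases eq_or_lt_of_le hx0 with h0 | h0
    · exact Or.inl (Or.inl h0.symm)
    have hinv : (1:ℝ) ≤ 1 / x := (le_div_iff₀ h0).mpr (by linarith)
    set n : ℕ := ⌊1 / x⌋₊ with hn_def
    have hn1 : 1 ≤ n := Nat.le_floor (by exact_mod_cast hinv)
    have hnfl : (n : ℝ) ≤ 1 / x := Nat.floor_le (by linarith)
    have hnfl' : 1 / x < (n : ℝ) + 1 := Nat.lt_floor_add_one _
    have hxle : x ≤ ((n : ℝ))⁻¹ := by
      rw [inv_eq_one_div, le_div_iff₀ (by exact_mod_cast hn1)]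
      calc x * n ≤ x * (1 / x) := by
            exact mul_le_mul_of_nonneg_left hnfl h0.le
        _ = 1 := by field_simp
    have hxgt : (((n : ℝ)) + 1)⁻¹ < x := by
      rw [inv_eq_one_div, div_lt_iff₀ (by positivity)]
      have := (div_lt_iff₀ h0).mp hnfl'
      linarith
    rcases eq_or_lt_of_le hxle with hxeq | hxlt
    · refine Or.inl (Or.inr ⟨n - 1, ?_⟩)
      have : ((n - 1 : ℕ) : ℝ) + 1 = (n : ℝ) := by
        have := Nat.succ_pred_eq_of_pos hn1
        push_cast [Nat.cast_sub hn1]; ring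
      show (((n - 1 : ℕ) : ℝ) + 1)⁻¹ = x
      rw [this]; exact hxeq.symm
    · refine Or.inr (Set.mem_iUnion.mpr ⟨n - 1, hxs, ?_, ?_⟩)
      · have h2 : ((n - 1 : ℕ) : ℝ) + 2 = (n : ℝ) + 1 := by
          push_cast [Nat.cast_sub hn1]; ring
        rw [h2]; exact hxgt
      · have h1 : ((n - 1 : ℕ) : ℝ) + 1 = (n : ℝ) := by
          push_cast [Nat.cast_sub hn1]; ring
        rw [h1]; exact hxlt
  -- each piece fits in the image of one branch
  have hpiece : ∀ k : ℕ, gaussMap ⁻¹' s ∩ Ioo ((k : ℝ) + 2)⁻¹ ((k : ℝ) + 1)⁻¹ ⊆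
      (fun u : ℝ => (u + ((k : ℝ) + 1))⁻¹) '' (s ∩ Ioo 0 1) := by
    intro k x ⟨hxs, hx1, hx2⟩
    have hk1 : (0:ℝ) < (k : ℝ) + 1 := by positivity
    have hk2 : (0:ℝ) < (k : ℝ) + 2 := by positivity
    have hx0 : (0:ℝ) < x := lt_trans (by positivity) hx1
    have hgt : (k : ℝ) + 1 < 1 / x := by
      rw [lt_div_iff₀ hx0]
      calc ((k : ℝ) + 1) * x < ((k : ℝ) + 1) * ((k : ℝ) + 1)⁻¹ := by
            exact mul_lt_mul_of_pos_left hx2 hk1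
        _ = 1 := mul_inv_cancel₀ (ne_of_gt hk1)
    have hlt : 1 / x < (k : ℝ) + 2 := by
      rw [div_lt_iff₀ hx0]
      calc (1:ℝ) = ((k : ℝ) + 2) * ((k : ℝ) + 2)⁻¹ := (mul_inv_cancel₀ (ne_of_gt hk2)).symm
        _ < ((k : ℝ) + 2) * x := by exact mul_lt_mul_of_pos_left hx1 hk2
    set u : ℝ := 1 / x - ((k : ℝ) + 1) with hu_def
    have hu0 : 0 < u := by simp only [hu_def]; linarith
    have hu1 : u < 1 := by simp only [hu_def]; linarith
    have hfloor : ⌊1 / x⌋ = (k : ℤ) + 1 := by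
      rw [Int.floor_eq_iff]
      constructor
      · push_cast; linarith
      · push_cast; linarith
    have hgauss : gaussMap x = u := by
      unfold gaussMap
      rw [if_neg (ne_of_gt hx0), ← Int.self_sub_floor, hfloor]
      push_cast [hu_def]; ring
    have hxs' : gaussMap x ∈ s := hxs
    rw [hgauss] at hxs'
    refine ⟨u, ⟨hxs', hu0, hu1⟩, ?_⟩
    show (u + ((k : ℝ) + 1))⁻¹ = x
    have h : u + ((k : ℝ) + 1) = 1 / x := by simp [hu_def]
    rw [h, one_div, inv_inv]
  -- summing
  have hV : volume (s ∩ Ioo (0:ℝ) 1) ≤ volume (s ∩ Icc (0:ℝ) 1) :=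
    measure_mono (Set.inter_subset_inter_right _ Ioo_subset_Icc_self)
  have hshift : HasSum (fun k : ℕ => (((k : ℝ) + 1) ^ 2)⁻¹) (π ^ 2 / 6) := by
    have h := (hasSum_nat_add_iff (f := fun n : ℕ => (1 : ℝ) / (n : ℝ) ^ 2) 1).mpr
      (by simpa using hasSum_zeta_two)
    simpa [one_div] using h
  have hsum : Summable (fun k : ℕ => (((k : ℝ) + 1) ^ 2)⁻¹) := hshift.summable
  have htsum : ∑' k : ℕ, (((k : ℝ) + 1) ^ 2)⁻¹ = π ^ 2 / 6 := hshift.tsum_eq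
  calc volume (gaussMap ⁻¹' s ∩ Icc 0 1)
      ≤ volume (N ∪ ⋃ k : ℕ, (gaussMap ⁻¹' s ∩ Ioo ((k : ℝ) + 2)⁻¹ ((k : ℝ) + 1)⁻¹)) :=
        measure_mono hcover
    _ ≤ volume N + volume (⋃ k : ℕ, (gaussMap ⁻¹' s ∩ Ioo ((k : ℝ) + 2)⁻¹ ((k : ℝ) + 1)⁻¹)) :=
        measure_union_le _ _
    _ ≤ 0 + ∑' k : ℕ, volume (gaussMap ⁻¹' s ∩ Ioo ((k : ℝ) + 2)⁻¹ ((k : ℝ) + 1)⁻¹) := by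
        rw [hNnull]; exact add_le_add le_rfl (measure_iUnion_le _)
    _ = ∑' k : ℕ, volume (gaussMap ⁻¹' s ∩ Ioo ((k : ℝ) + 2)⁻¹ ((k : ℝ) + 1)⁻¹) := by
        rw [zero_add]
    _ ≤ ∑' k : ℕ, ENNReal.ofReal ((((k : ℝ) + 1) ^ 2)⁻¹) * volume (s ∩ Icc (0:ℝ) 1) := by
        refine ENNReal.tsum_le_tsum fun k => ?_
        calc volume (gaussMap ⁻¹' s ∩ Ioo ((k : ℝ) + 2)⁻¹ ((k : ℝ) + 1)⁻¹)
            ≤ volume ((fun u : ℝ => (u + ((k : ℝ) + 1))⁻¹) '' (s ∩ Ioo 0 1)) :=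
              measure_mono (hpiece k)
          _ ≤ ENNReal.ofReal ((((k + 1 : ℕ) : ℝ)) ^ 2)⁻¹ * volume (s ∩ Ioo (0:ℝ) 1) := by
              have := gauss_branch_bound s hs (k + 1) (Nat.le_add_left 1 k)
              simpa [Nat.cast_add, Nat.cast_one] using this
          _ ≤ ENNReal.ofReal ((((k : ℝ) + 1) ^ 2)⁻¹) * volume (s ∩ Icc (0:ℝ) 1) := by
              push_cast
              exact mul_le_mul_right hV _
    _ = (∑' k : ℕ, ENNReal.ofReal ((((k : ℝ) + 1) ^ 2)⁻¹)) * volume (s ∩ Icc (0:ℝ) 1) :=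
        ENNReal.tsum_mul_right
    _ = ENNReal.ofReal (π ^ 2 / 6) * volume (s ∩ Icc (0:ℝ) 1) := by
        rw [← ENNReal.ofReal_tsum_of_nonneg (fun k => by positivity) hsum, htsum]

theorem comp_gaussMap_L1_bound :
    ∃ K : ℝ, 1 < K ∧ ∀ f : ℝ → ℂ, IntegrableOn f (Set.Icc (0:ℝ) 1) →
      IntegrableOn (fun x => f (gaussMap x)) (Set.Icc (0:ℝ) 1) ∧
      (∫ x in Set.Icc (0:ℝ) 1, ‖f (gaussMap x)‖) ≤ K * ∫ x in Set.Icc (0:ℝ) 1, ‖f x‖ := by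
  have hKpos : (0:ℝ) < π ^ 2 / 6 := by positivity
  refine ⟨π ^ 2 / 6, by nlinarith [Real.pi_gt_three], fun f hf => ?_⟩
  set μ := volume.restrict (Icc (0:ℝ) 1) with hμ_def
  have hmeas : Measurable gaussMap := gaussMap_measurable
  set c : ℝ≥0∞ := ENNReal.ofReal (π ^ 2 / 6) with hc_def
  have hmap : Measure.map gaussMap μ ≤ c • μ := by
    refine Measure.le_iff.mpr fun s hs => ?_
    rw [Measure.map_apply hmeas hs, hμ_def, Measure.smul_apply, smul_eq_mul,
      Measure.restrict_apply (hmeas hs), Measure.restrict_apply hs]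
    exact gauss_preimage_bound s hs
  have hac : Measure.map gaussMap μ ≪ μ :=
    Measure.absolutelyContinuous_of_le_smul hmap
  have hsm : AEStronglyMeasurable f (Measure.map gaussMap μ) :=
    hf.aestronglyMeasurable.mono_ac hac
  have hcomp : AEStronglyMeasurable (fun x => f (gaussMap x)) μ :=
    hsm.comp_aemeasurable hmeas.aemeasurable
  have hlim : ∫⁻ x, ‖f (gaussMap x)‖₊ ∂μ = ∫⁻ y, ‖f y‖₊ ∂(Measure.map gaussMap μ) :=
    (lintegral_map' hsm.aemeasurable.nnnorm.coe_nnreal_ennreal hmeas.aemeasurable).symm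
  have hle : ∫⁻ x, ‖f (gaussMap x)‖₊ ∂μ ≤ c * ∫⁻ x, ‖f x‖₊ ∂μ := by
    rw [hlim, ← smul_eq_mul, ← lintegral_smul_measure]
    exact lintegral_mono' hmap le_rfl
  have hJfin : ∫⁻ x, ‖f x‖₊ ∂μ < ⊤ := hf.2
  have hRfin : c * ∫⁻ x, ‖f x‖₊ ∂μ < ⊤ :=
    ENNReal.mul_lt_top (hc_def ▸ ENNReal.ofReal_lt_top) hJfin
  have hint : IntegrableOn (fun x => f (gaussMap x)) (Set.Icc (0:ℝ) 1) :=
    ⟨hcomp, lt_of_le_of_lt hle hRfin⟩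
  refine ⟨hint, ?_⟩
  have h1 : ∫ x, ‖f (gaussMap x)‖ ∂μ =
      (∫⁻ x, ‖f (gaussMap x)‖₊ ∂μ).toReal := integral_norm_eq_lintegral_enorm hcomp
  have h2 : ∫ x, ‖f x‖ ∂μ = (∫⁻ x, ‖f x‖₊ ∂μ).toReal :=
    integral_norm_eq_lintegral_enorm hf.aestronglyMeasurable
  show (∫ x, ‖f (gaussMap x)‖ ∂μ) ≤ π ^ 2 / 6 * ∫ x, ‖f x‖ ∂μ
  rw [h1, h2]
  calc (∫⁻ x, ‖f (gaussMap x)‖₊ ∂μ).toReal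
      ≤ (c * ∫⁻ x, ‖f x‖₊ ∂μ).toReal := ENNReal.toReal_mono hRfin.ne hle
    _ = π ^ 2 / 6 * (∫⁻ x, ‖f x‖₊ ∂μ).toReal := by
        rw [ENNReal.toReal_mul, hc_def, ENNReal.toReal_ofReal hKpos.le]
end

section
/- Let t ∈ ℝ with t ≠ 0 and set s = 1 + it. Let f : ℂ → ℂ be holomorphic and bounded on 𝔻, not identically zero on 𝔻, and let λ ∈ ℂ be such that Σ_{n=1}^∞ (x+n)^{−2s} f(1/(x+n)) = λ f(x) for all x ∈ [0,1], where (x+n)^{−2s} := exp(−2s·log(x+n)) with the real logarithm. Then |λ| < 1. -/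
open Complex Filter Topology

/-- The disc `𝔻 = {z : |z − 2/3| < 1}`. -/
def gaussDisc : Set ℂ := Metric.ball ((2:ℂ)/3) 1

lemma isOpen_gaussDisc : IsOpen gaussDisc := Metric.isOpen_ball

lemma mem_gaussDisc_of_real {x : ℝ} (h0 : 0 ≤ x) (h1 : x ≤ 1) : (x:ℂ) ∈ gaussDisc := by
  simp only [gaussDisc, Metric.mem_ball, Complex.dist_eq]
  have : (x:ℂ) - 2/3 = ((x - 2/3 : ℝ) : ℂ) := by push_cast; ring
  rw [this, Complex.norm_real, Real.norm_eq_abs]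
  rw [abs_lt]; constructor <;> linarith

lemma conj_mem_gaussDisc {z : ℂ} (hz : z ∈ gaussDisc) : (starRingEnd ℂ) z ∈ gaussDisc := by
  simp only [gaussDisc, Metric.mem_ball, Complex.dist_eq] at *
  have : (starRingEnd ℂ) z - 2/3 = (starRingEnd ℂ) (z - 2/3) := by
    rw [map_sub, map_div₀, Complex.conj_ofNat, Complex.conj_ofNat]
  rwa [this, Complex.norm_conj]

lemma hasSum_tele (x : ℝ) (hx : 0 ≤ x) :
    HasSum (fun n : ℕ => ((x + n + 1) * (x + n + 2))⁻¹) (x + 1)⁻¹ := by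
  have hpos : ∀ n : ℕ, (0:ℝ) < x + n + 1 := fun n => by positivity
  rw [hasSum_iff_tendsto_nat_of_nonneg (fun n => by positivity)]
  have hlhs : ∀ n : ℕ, ∑ i ∈ Finset.range n, ((x + i + 1) * (x + i + 2))⁻¹
      = (x + 1)⁻¹ - (x + n + 1)⁻¹ := by
    intro n
    have key : ∀ i ∈ Finset.range n, ((x + (i:ℝ) + 1) * (x + i + 2))⁻¹
        = (fun i : ℕ => (x + i + 1)⁻¹) i - (fun i : ℕ => (x + i + 1)⁻¹) (i+1) := by
      intro i _
      have h1 : (0:ℝ) < x + i + 1 := hpos i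
      have h2 : (0:ℝ) < x + i + 2 := by positivity
      simp only [Nat.cast_add, Nat.cast_one]
      rw [eq_sub_iff_add_eq]
      field_simp
      ring
    rw [Finset.sum_congr rfl key, Finset.sum_range_sub' (fun i : ℕ => (x + i + 1)⁻¹) n]
    norm_num
  simp only [hlhs]
  have : Tendsto (fun n : ℕ => (x + n + 1)⁻¹) atTop (𝓝 0) := by
    apply Tendsto.inv_tendsto_atTop
    apply tendsto_atTop_add_const_right
    apply tendsto_atTop_add_const_left
    exact tendsto_natCast_atTop_atTop
  simpa using (tendsto_const_nhds.sub this)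

lemma eqOn_gaussDisc_of_seq {g h : ℂ → ℂ} (hg : DifferentiableOn ℂ g gaussDisc)
    (hh : DifferentiableOn ℂ h gaussDisc) {z₀ : ℂ} (hz₀ : z₀ ∈ gaussDisc)
    (u : ℕ → ℂ) (hu : Tendsto u atTop (𝓝 z₀)) (hne : ∀ n, u n ≠ z₀)
    (heq : ∀ n, g (u n) = h (u n)) : Set.EqOn g h gaussDisc := by
  apply AnalyticOnNhd.eqOn_of_preconnected_of_frequently_eq
    (hg.analyticOnNhd isOpen_gaussDisc) (hh.analyticOnNhd isOpen_gaussDisc)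
    ((convex_ball _ _).isPreconnected) hz₀
  have hu' : Tendsto u atTop (𝓝[≠] z₀) := by
    apply tendsto_nhdsWithin_of_tendsto_nhds_of_eventually_within _ hu
    filter_upwards with n using hne n
  exact hu'.frequently (Frequently.of_forall heq)

lemma hasDerivAt_conj_conj {f : ℂ → ℂ} {z d : ℂ} (h : HasDerivAt f d ((starRingEnd ℂ) z)) :
    HasDerivAt (fun w => (starRingEnd ℂ) (f ((starRingEnd ℂ) w))) ((starRingEnd ℂ) d) z := by
  rw [hasDerivAt_iff_tendsto_slope] at h ⊢
  have hslope : ∀ w, slope (fun w => (starRingEnd ℂ) (f ((starRingEnd ℂ) w))) z w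
      = (starRingEnd ℂ) (slope f ((starRingEnd ℂ) z) ((starRingEnd ℂ) w)) := by
    intro w
    simp only [slope_def_field, div_eq_mul_inv]
    rw [map_mul, map_inv₀, ← map_sub, ← map_sub]; simp
  have hconj : Tendsto (starRingEnd ℂ) (𝓝[≠] z) (𝓝[≠] ((starRingEnd ℂ) z)) := by
    apply Filter.Tendsto.inf
    · exact (Complex.continuous_conj.tendsto z)
    · exact tendsto_principal_principal.mpr (fun w hw => by
        simp only [Set.mem_compl_iff, Set.mem_singleton_iff] at *
        exact fun hc => hw ((starRingEnd ℂ).injective hc))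
  have := (Complex.continuous_conj.tendsto _).comp (h.comp hconj)
  refine this.congr' ?_
  filter_upwards with w
  exact (hslope w).symm

lemma tsum_triangle_align {a : ℕ → ℂ} {S : ℂ} (hS : HasSum a S)
    (h : ∑' n, ‖a n‖ = ‖S‖) (hS0 : S ≠ 0) (n m : ℕ) :
    a n * (‖a m‖ : ℝ) = a m * (‖a n‖ : ℝ) := by
  have ha : Summable a := hS.summable
  have hnorm : Summable fun n => ‖a n‖ := ha.norm
  have key : ∀ k, a k * (starRingEnd ℂ) S = ((‖a k‖ * ‖S‖ : ℝ) : ℂ) := by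
    have hs : Summable fun k => a k * (starRingEnd ℂ) S := ha.mul_right _
    have hre : Summable fun k => (a k * (starRingEnd ℂ) S).re :=
      (Complex.hasSum_re hs.hasSum).summable
    set r : ℕ → ℝ := fun k => ‖a k‖ * ‖S‖ - (a k * (starRingEnd ℂ) S).re with hr
    have hrs : Summable r := (hnorm.mul_right _).sub hre
    have hrnn : ∀ k, 0 ≤ r k := by
      intro k
      have h1 : (a k * (starRingEnd ℂ) S).re ≤ ‖a k * (starRingEnd ℂ) S‖ := Complex.re_le_norm _
      have h2 : ‖a k * (starRingEnd ℂ) S‖ = ‖a k‖ * ‖S‖ := by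
        rw [norm_mul]; simp
      simp only [hr]; linarith [h1.trans_eq h2]
    have hrz : ∑' k, r k = 0 := by
      rw [Summable.tsum_sub (hnorm.mul_right _) hre]
      rw [tsum_mul_right, h, ← Complex.re_tsum hs, tsum_mul_right, hS.tsum_eq,
        Complex.mul_conj]
      simp [Complex.normSq_eq_norm_sq, sq]
    have hr0 : ∀ k, r k = 0 := by
      intro k
      by_contra hk
      have : 0 < ∑' k, r k := Summable.tsum_pos hrs hrnn k (lt_of_le_of_ne (hrnn k) (Ne.symm hk))
      linarith [hrz]
    intro k
    have h3 : (a k * (starRingEnd ℂ) S).re = ‖a k‖ * ‖S‖ := by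
      have := hr0 k; simp only [hr] at this; linarith
    have habs : ‖a k * (starRingEnd ℂ) S‖ = ‖a k‖ * ‖S‖ := by rw [norm_mul]; simp
    have him : (a k * (starRingEnd ℂ) S).im = 0 := by
      have hsq := Complex.sq_norm (a k * (starRingEnd ℂ) S)
      rw [Complex.normSq_apply] at hsq
      have : (a k * (starRingEnd ℂ) S).im * (a k * (starRingEnd ℂ) S).im = 0 := by
        rw [pow_two, habs, h3] at hsq
        linarith
      exact mul_self_eq_zero.mp this
    apply Complex.ext
    · simp [h3]
    · simp [him]
  have hconj : (starRingEnd ℂ) S ≠ 0 := by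
    simpa using hS0
  apply mul_right_cancel₀ hconj
  calc a n * (‖a m‖ : ℝ) * ((starRingEnd ℂ) S)
      = (a n * (starRingEnd ℂ) S) * (‖a m‖ : ℝ) := by ring
    _ = ((‖a n‖ * ‖S‖ : ℝ) : ℂ) * (‖a m‖ : ℝ) := by rw [key n]
    _ = ((‖a m‖ * ‖S‖ : ℝ) : ℂ) * (‖a n‖ : ℝ) := by push_cast; ring
    _ = (a m * (starRingEnd ℂ) S) * (‖a n‖ : ℝ) := by rw [key m]
    _ = a m * (‖a n‖ : ℝ) * ((starRingEnd ℂ) S) := by ring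

lemma no_conv (β : ℝ) (hβ : β ≠ 0) (L : ℂ)
    (h : Tendsto (fun n : ℕ => Complex.exp ((β * Real.log ((n:ℝ)+1) : ℝ) * Complex.I))
      atTop (𝓝 L)) : False := by
  set F : ℕ → ℂ := fun n => Complex.exp ((β * Real.log n : ℝ) * Complex.I) with hF
  have h' : Tendsto F atTop (𝓝 L) := by
    rw [← tendsto_add_atTop_iff_nat 1]
    convert h using 2 with n
    simp only [hF]
    push_cast
    ring_nf
  have hL1 : ‖L‖ = 1 := by
    have h1 : Tendsto (fun n => ‖F n‖) atTop (𝓝 ‖L‖) := h'.norm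
    have h2 : ∀ n, ‖F n‖ = 1 := by
      intro n
      simp only [hF]
      exact Complex.norm_exp_ofReal_mul_I _
    rw [tendsto_congr h2] at h1
    exact tendsto_nhds_unique h1 tendsto_const_nhds
  set c : ℝ := Real.exp (Real.pi / β) with hcdef
  have hc : 0 < c := Real.exp_pos _
  have hlogc : Real.log c = Real.pi / β := Real.log_exp _
  set k : ℕ → ℕ := fun n => ⌈c * n⌉₊ with hk
  have hktop : Tendsto k atTop atTop := by
    rw [tendsto_atTop]
    intro b
    have hcn : Tendsto (fun n : ℕ => c * n) atTop atTop :=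
      Tendsto.const_mul_atTop hc tendsto_natCast_atTop_atTop
    filter_upwards [hcn.eventually_ge_atTop (b:ℝ)] with n hn
    have : (b:ℝ) ≤ (⌈c * n⌉₊ : ℝ) := hn.trans (Nat.le_ceil _)
    exact_mod_cast this
  set d : ℕ → ℝ := fun n => Real.log (k n) - Real.log c - Real.log n with hd
  have hbounds : ∀ᶠ n : ℕ in atTop, 0 ≤ d n ∧ d n ≤ Real.log (1 + (c*n)⁻¹) := by
    filter_upwards [eventually_ge_atTop 1] with n hn
    have hn1 : (1:ℝ) ≤ (n:ℝ) := by exact_mod_cast hn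
    have hcn : (0:ℝ) < c * n := by positivity
    have hlogcn : Real.log (c * n) = Real.log c + Real.log n :=
      Real.log_mul (ne_of_gt hc) (by positivity)
    constructor
    · have h1 : Real.log (c * n) ≤ Real.log (k n) :=
        Real.log_le_log hcn (Nat.le_ceil _)
      simp only [hd]; linarith [h1, hlogcn]
    · have h2 : (k n : ℝ) ≤ c * n + 1 := le_of_lt (Nat.ceil_lt_add_one (le_of_lt hcn))
      have h3 : c * n + 1 = (c * n) * (1 + (c*n)⁻¹) := by field_simp
      have hkpos : (0:ℝ) < (k n : ℝ) := by
        have : (1:ℕ) ≤ k n := by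
          rw [hk]; simp only [Nat.one_le_ceil_iff]; positivity
        exact_mod_cast this
      have h4 : Real.log (k n) ≤ Real.log ((c * n) * (1 + (c*n)⁻¹)) :=
        Real.log_le_log hkpos (h3 ▸ h2)
      have h5 : Real.log ((c * n) * (1 + (c*n)⁻¹))
          = Real.log c + Real.log n + Real.log (1 + (c*n)⁻¹) := by
        rw [Real.log_mul (ne_of_gt hcn) (by positivity), hlogcn]
      simp only [hd]; linarith [h4, h5]
  have htend0 : Tendsto (fun n : ℕ => Real.log (1 + (c*n)⁻¹)) atTop (𝓝 0) := by
    have h1 : Tendsto (fun n : ℕ => 1 + (c*n)⁻¹) atTop (𝓝 1) := by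
      have : Tendsto (fun n : ℕ => (c*n)⁻¹) atTop (𝓝 0) :=
        Tendsto.inv_tendsto_atTop (Tendsto.const_mul_atTop hc tendsto_natCast_atTop_atTop)
      simpa using tendsto_const_nhds.add this
    have := ((Real.continuousAt_log (one_ne_zero)).tendsto).comp h1
    simpa [Real.log_one, Function.comp_def] using this
  have hdtend : Tendsto d atTop (𝓝 0) := by
    apply tendsto_of_tendsto_of_tendsto_of_le_of_le' tendsto_const_nhds htend0
    · filter_upwards [hbounds] with n hn using hn.1
    · filter_upwards [hbounds] with n hn using hn.2
  have hsplit : ∀ᶠ n : ℕ in atTop, F (k n)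
      = F n * Complex.exp ((β * Real.log c : ℝ) * Complex.I)
          * Complex.exp ((β * d n : ℝ) * Complex.I) := by
    filter_upwards with n
    simp only [hF]
    rw [← Complex.exp_add, ← Complex.exp_add]
    congr 1
    have : β * Real.log (k n) = β * Real.log n + β * Real.log c + β * d n := by
      simp only [hd]; ring
    rw [this, Complex.ofReal_add, Complex.ofReal_add]
    ring
  have hexp_c : Complex.exp ((β * Real.log c : ℝ) * Complex.I) = -1 := by
    rw [hlogc, show β * (Real.pi / β) = Real.pi by field_simp]
    exact Complex.exp_pi_mul_I
  have hexp_d : Tendsto (fun n => Complex.exp ((β * d n : ℝ) * Complex.I)) atTop (𝓝 1) := by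
    have h1 : Tendsto (fun n => ((β * d n : ℝ) : ℂ) * Complex.I) atTop (𝓝 0) := by
      have h2 : Tendsto (fun n => β * d n) atTop (𝓝 0) := by
        simpa using hdtend.const_mul β
      have h3 : Tendsto (fun n => ((β * d n : ℝ) : ℂ)) atTop (𝓝 0) := by
        have := (Complex.continuous_ofReal.tendsto 0).comp h2
        simpa [Function.comp_def, Complex.ofReal_mul] using this
      simpa [Complex.ofReal_mul] using h3.mul_const Complex.I
    have := (Complex.continuous_exp.tendsto 0).comp h1
    simpa [Complex.exp_zero, Function.comp_def] using this
  have hlim1 : Tendsto (fun n => F (k n)) atTop (𝓝 L) := h'.comp hktop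
  have hlim2 : Tendsto (fun n => F (k n)) atTop
      (𝓝 (L * Complex.exp ((β * Real.log c : ℝ) * Complex.I) * 1)) := by
    refine Tendsto.congr' ?_ (((h'.mul_const _).mul hexp_d))
    filter_upwards [hsplit] with n hn
    exact hn.symm
  rw [hexp_c] at hlim2
  have heq := tendsto_nhds_unique hlim1 hlim2
  have hL0 : L = 0 := by linear_combination heq / 2
  rw [hL0] at hL1
  simp at hL1


set_option maxHeartbeats 2000000 in
theorem transferOp_spectral_radius_line_re_eq_one (t : ℝ) (ht : t ≠ 0)
    (f : ℂ → ℂ)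
    (hf_holo : DifferentiableOn ℂ f gaussDisc)
    (hf_bdd : ∃ M : ℝ, ∀ z ∈ gaussDisc, ‖f z‖ ≤ M)
    (hf_ne : ∃ z ∈ gaussDisc, f z ≠ 0)
    (lam : ℂ)
    (heig : ∀ x : ℝ, x ∈ Set.Icc (0:ℝ) 1 →
      ∑' n : ℕ, Complex.exp (-(2 * (1 + t * Complex.I)) * (Real.log (x + (n : ℕ) + 1) : ℂ))
          * f (1 / ((x : ℂ) + (n : ℕ) + 1))
        = lam * f (x : ℂ)) :
    ‖lam‖ < 1 := by
  by_contra hc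
  push_neg at hc
  -- local notation
  let a : ℝ → ℕ → ℂ := fun x n =>
    Complex.exp (-(2 * (1 + (t:ℂ) * Complex.I)) * ((Real.log (x + n + 1) : ℝ) : ℂ))
      * f (1 / ((x : ℂ) + n + 1))
  have heig' : ∀ x : ℝ, x ∈ Set.Icc (0:ℝ) 1 → ∑' n : ℕ, a x n = lam * f x := heig
  have hmem : ∀ x : ℝ, x ∈ Set.Icc (0:ℝ) 1 → (x:ℂ) ∈ gaussDisc :=
    fun x hx => mem_gaussDisc_of_real hx.1 hx.2
  have hwpos : ∀ x : ℝ, 0 ≤ x → ∀ n : ℕ, (0:ℝ) < x + n + 1 := fun x hx n => by positivity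
  have hy_mem : ∀ x : ℝ, 0 ≤ x → ∀ n : ℕ, (x + n + 1)⁻¹ ∈ Set.Icc (0:ℝ) 1 := by
    intro x hx n
    constructor
    · positivity
    · rw [inv_le_one_iff₀]; right; linarith [(Nat.cast_nonneg n : (0:ℝ) ≤ n)]
  have hcast : ∀ (x : ℝ) (n : ℕ), (((x + (n:ℝ) + 1)⁻¹ : ℝ) : ℂ) = 1 / ((x:ℂ) + n + 1) := by
    intro x n; push_cast; rw [one_div]
  -- norm formula
  have hnorm_a : ∀ x : ℝ, 0 ≤ x → ∀ n : ℕ,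
      ‖a x n‖ = ‖f (1 / ((x:ℂ) + n + 1))‖ * ((x + n + 1) * (x + n + 1))⁻¹ := by
    intro x hx n
    have hw := hwpos x hx n
    show ‖Complex.exp _ * f _‖ = _
    rw [norm_mul, mul_comm]
    congr 1
    have hexp : -(2 * (1 + (t:ℂ) * Complex.I)) * ((Real.log (x + n + 1) : ℝ) : ℂ)
        = ((-(2 * Real.log (x + n + 1)) : ℝ) : ℂ)
          + ((-(2 * t * Real.log (x + n + 1)) : ℝ) : ℂ) * Complex.I := by
      push_cast; ring
    rw [hexp, Complex.exp_add, norm_mul,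
      Complex.norm_exp_ofReal_mul_I, mul_one, Complex.norm_exp]
    simp only [Complex.ofReal_re]
    rw [show -(2 * Real.log (x + n + 1)) = -(Real.log (x + n + 1) + Real.log (x + n + 1)) by ring,
      Real.exp_neg, Real.exp_add, Real.exp_log hw, mul_inv]
  -- continuity of g
  have hfc : ContinuousOn (fun x : ℝ => f x) (Set.Icc (0:ℝ) 1) :=
    hf_holo.continuousOn.comp Complex.continuous_ofReal.continuousOn hmem
  set g : ℝ → ℝ := fun x => ‖f x‖ * (1 + x) with hgdef
  have hgc : ContinuousOn g (Set.Icc (0:ℝ) 1) :=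
    hfc.norm.mul ((continuous_const.add continuous_id).continuousOn)
  obtain ⟨x₀, hx₀, hmax⟩ := isCompact_Icc.exists_isMaxOn (Set.nonempty_Icc.mpr zero_le_one) hgc
  set G := g x₀ with hGdef
  have hle : ∀ x ∈ Set.Icc (0:ℝ) 1, g x ≤ G := fun x hx => hmax hx
  have hg_nonneg : ∀ x : ℝ, 0 ≤ x → 0 ≤ g x := by
    intro x hx; simp only [hgdef]; positivity
  -- G > 0
  have hGpos : 0 < G := by
    rcases hf_ne with ⟨z, hz, hfz⟩
    by_contra hGle
    push_neg at hGle
    have hf0 : ∀ x : ℝ, x ∈ Set.Icc (0:ℝ) 1 → f x = 0 := by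
      intro x hx
      have h1 : g x = 0 := le_antisymm ((hle x hx).trans hGle) (hg_nonneg x hx.1)
      simp only [hgdef] at h1
      have h2 : (0:ℝ) < 1 + x := by linarith [hx.1]
      have := mul_eq_zero.mp h1
      rcases this with h | h
      · exact norm_eq_zero.mp h
      · linarith
    have hEq : Set.EqOn f (fun _ => (0:ℂ)) gaussDisc := by
      apply eqOn_gaussDisc_of_seq hf_holo (differentiableOn_const 0)
        (show ((0:ℝ):ℂ) ∈ gaussDisc from mem_gaussDisc_of_real le_rfl zero_le_one)
        (fun n => (((n:ℝ) + 2)⁻¹ : ℝ))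
      · have : Tendsto (fun n : ℕ => ((n:ℝ) + 2)⁻¹) atTop (𝓝 0) :=
          Tendsto.inv_tendsto_atTop (tendsto_atTop_add_const_right _ _ tendsto_natCast_atTop_atTop)
        exact (Complex.continuous_ofReal.tendsto 0).comp this
      · intro n
        have : (0:ℝ) < ((n:ℝ) + 2)⁻¹ := by positivity
        exact_mod_cast ne_of_gt this
      · intro n
        apply hf0
        constructor
        · positivity
        · rw [inv_le_one_iff₀]; right; linarith [(Nat.cast_nonneg n : (0:ℝ) ≤ n)]
    exact hfz (hEq hz)
  -- pointwise norm bound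
  have hbound : ∀ x ∈ Set.Icc (0:ℝ) 1, ∀ n : ℕ,
      ‖a x n‖ ≤ G * ((x + n + 1) * (x + n + 2))⁻¹ := by
    intro x hx n
    have hw := hwpos x hx.1 n
    have hw2 : (0:ℝ) < x + n + 2 := by linarith
    have hymem := hy_mem x hx.1 n
    have hfy : ‖f (1 / ((x:ℂ) + n + 1))‖ * (1 + (x + n + 1)⁻¹) ≤ G := by
      have := hle _ hymem
      simp only [hgdef] at this
      rwa [hcast x n] at this
    rw [hnorm_a x hx.1 n]
    have hfy2 : ‖f (1 / ((x:ℂ) + n + 1))‖ * (x + n + 2) ≤ G * (x + n + 1) := by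
      have h3 := mul_le_mul_of_nonneg_right hfy (le_of_lt hw)
      have h4 : (1 + (x + n + 1)⁻¹) * (x + n + 1) = x + n + 2 := by field_simp; ring
      calc ‖f (1 / ((x:ℂ) + n + 1))‖ * (x + n + 2)
          = ‖f (1 / ((x:ℂ) + n + 1))‖ * ((1 + (x + n + 1)⁻¹) * (x + n + 1)) := by rw [h4]
        _ = ‖f (1 / ((x:ℂ) + n + 1))‖ * (1 + (x + n + 1)⁻¹) * (x + n + 1) := by ring
        _ ≤ G * (x + n + 1) := h3
    rw [← div_eq_mul_inv, ← div_eq_mul_inv, div_le_div_iff₀ (by positivity) (by positivity)]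
    nlinarith [mul_le_mul_of_nonneg_left hfy2 (le_of_lt hw)]
  have hsummable_norm : ∀ x ∈ Set.Icc (0:ℝ) 1, Summable (fun n => ‖a x n‖) := by
    intro x hx
    exact Summable.of_nonneg_of_le (fun n => norm_nonneg _) (hbound x hx)
      (((hasSum_tele x hx.1).summable).mul_left G)
  have hsummable : ∀ x ∈ Set.Icc (0:ℝ) 1, Summable (a x) :=
    fun x hx => (hsummable_norm x hx).of_norm
  have htsum_norm_le : ∀ x ∈ Set.Icc (0:ℝ) 1, ∑' n, ‖a x n‖ ≤ G * (x + 1)⁻¹ := by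
    intro x hx
    have h1 : ∑' n, ‖a x n‖ ≤ ∑' n : ℕ, G * ((x + n + 1) * (x + n + 2))⁻¹ :=
      Summable.tsum_le_tsum (hbound x hx) (hsummable_norm x hx)
        (((hasSum_tele x hx.1).summable).mul_left G)
    have h2 : ∑' n : ℕ, G * ((x + n + 1) * (x + n + 2))⁻¹ = G * (x + 1)⁻¹ := by
      rw [tsum_mul_left, (hasSum_tele x hx.1).tsum_eq]
    linarith
  have key1 : ∀ x ∈ Set.Icc (0:ℝ) 1, ‖lam‖ * ‖f (x:ℂ)‖ ≤ G * (x + 1)⁻¹ := by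
    intro x hx
    have h1 : ‖lam * f (x:ℂ)‖ ≤ ∑' n, ‖a x n‖ := by
      rw [← heig' x hx]
      exact norm_tsum_le_tsum_norm (hsummable_norm x hx)
    rw [norm_mul] at h1
    linarith [htsum_norm_le x hx]
  -- ‖f x₀‖ value
  have hfx₀ : ‖f (x₀:ℂ)‖ = G * (1 + x₀)⁻¹ := by
    have h2 : (0:ℝ) < 1 + x₀ := by linarith [hx₀.1]
    rw [hGdef]; simp only [hgdef]; field_simp
  have h1x₀ : (0:ℝ) < 1 + x₀ := by linarith [hx₀.1]
  have hlam1 : ‖lam‖ = 1 := by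
    have h1 := key1 x₀ hx₀
    rw [hfx₀] at h1
    have h3 : ‖lam‖ * (G * (1 + x₀)⁻¹) ≤ G * (1 + x₀)⁻¹ := by
      rw [show x₀ + 1 = 1 + x₀ by ring] at h1; linarith
    have h4 : 0 < G * (1 + x₀)⁻¹ := by positivity
    nlinarith [h3, h4, hc]
  -- equality of norm-sums at the max point
  have heq_norm₀ : ∑' n, ‖a x₀ n‖ = G * (x₀ + 1)⁻¹ := by
    apply le_antisymm (htsum_norm_le x₀ hx₀)
    have h1 : ‖lam * f (x₀:ℂ)‖ ≤ ∑' n, ‖a x₀ n‖ := by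
      rw [← heig' x₀ hx₀]
      exact norm_tsum_le_tsum_norm (hsummable_norm x₀ hx₀)
    rw [norm_mul, hlam1, hfx₀, one_mul] at h1
    rw [show x₀ + 1 = 1 + x₀ by ring]
    exact h1
  -- each norm equals the telescoping weight at x₀
  have heach : ∀ n : ℕ, ‖a x₀ n‖ = G * ((x₀ + n + 1) * (x₀ + n + 2))⁻¹ := by
    by_contra hN
    push_neg at hN
    obtain ⟨N, hNe⟩ := hN
    set φ : ℕ → ℝ := fun n => G * ((x₀ + n + 1) * (x₀ + n + 2))⁻¹ - ‖a x₀ n‖ with hφ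
    have hφs : Summable φ :=
      (((hasSum_tele x₀ hx₀.1).summable).mul_left G).sub (hsummable_norm x₀ hx₀)
    have hφnn : ∀ n, 0 ≤ φ n := fun n => sub_nonneg.mpr (hbound x₀ hx₀ n)
    have hφz : ∑' n, φ n = 0 := by
      rw [Summable.tsum_sub (((hasSum_tele x₀ hx₀.1).summable).mul_left G) (hsummable_norm x₀ hx₀),
        tsum_mul_left, (hasSum_tele x₀ hx₀.1).tsum_eq, heq_norm₀]
      ring
    have hφN : 0 < φ N :=
      lt_of_le_of_ne (hφnn N) (fun hcon => hNe (by simp only [hφ] at hcon; linarith))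
    have := Summable.tsum_pos hφs hφnn N hφN
    linarith
  -- g attains G at the orbit points of x₀
  have hgy : ∀ n : ℕ, g ((x₀ + n + 1)⁻¹) = G := by
    intro n
    have hw := hwpos x₀ hx₀.1 n
    have hw2 : (0:ℝ) < x₀ + n + 2 := by linarith
    have h1 := heach n
    rw [hnorm_a x₀ hx₀.1 n] at h1
    have h2 : ‖f (1 / ((x₀:ℂ) + n + 1))‖ = G * (x₀ + n + 1) * (x₀ + n + 2)⁻¹ := by
      have hne1 : ((x₀ + (n:ℝ) + 1) * (x₀ + n + 1)) ≠ 0 := by positivity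
      field_simp at h1 ⊢
      nlinarith [h1]
    simp only [hgdef]
    rw [hcast x₀ n, h2]
    field_simp
    ring
  -- identity theorem : |f|²(1+x)² ≡ G² on the disc
  set fstar : ℂ → ℂ := fun z => (starRingEnd ℂ) (f ((starRingEnd ℂ) z)) with hfstardef
  have hfstar_diff : DifferentiableOn ℂ fstar gaussDisc := by
    intro z hz
    have hz' := conj_mem_gaussDisc hz
    have hfd : DifferentiableAt ℂ f ((starRingEnd ℂ) z) :=
      hf_holo.differentiableAt (isOpen_gaussDisc.mem_nhds hz')
    exact ((hasDerivAt_conj_conj hfd.hasDerivAt).differentiableAt).differentiableWithinAt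
  set H : ℂ → ℂ := fun z => f z * fstar z * (1 + z)^2 with hHdef
  have hH_diff : DifferentiableOn ℂ H gaussDisc := by
    apply DifferentiableOn.mul (hf_holo.mul hfstar_diff)
    exact (((differentiable_const (1:ℂ)).add differentiable_id).pow 2).differentiableOn
  have hH_real : ∀ x : ℝ, H (x:ℂ) = (((g x)^2 : ℝ) : ℂ) := by
    intro x
    simp only [hHdef, hfstardef, hgdef]
    rw [Complex.conj_ofReal, Complex.mul_conj]
    have : ((1:ℂ) + (x:ℂ))^2 = (((1 + x)^2 : ℝ) : ℂ) := by push_cast; ring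
    rw [this, ← Complex.ofReal_mul]
    congr 1
    rw [Complex.normSq_eq_norm_sq]
    ring
  have hHeq : Set.EqOn H (fun _ => (((G^2 : ℝ)):ℂ)) gaussDisc := by
    apply eqOn_gaussDisc_of_seq hH_diff (differentiableOn_const _)
      (show ((0:ℝ):ℂ) ∈ gaussDisc from mem_gaussDisc_of_real le_rfl zero_le_one)
      (fun n => (((x₀ + n + 1)⁻¹ : ℝ) : ℂ))
    · have : Tendsto (fun n : ℕ => (x₀ + n + 1)⁻¹) atTop (𝓝 0) := by
        apply Tendsto.inv_tendsto_atTop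
        apply tendsto_atTop_add_const_right
        apply tendsto_atTop_add_const_left
        exact tendsto_natCast_atTop_atTop
      exact (Complex.continuous_ofReal.tendsto 0).comp this
    · intro n
      exact_mod_cast ne_of_gt (inv_pos.mpr (hwpos x₀ hx₀.1 n))
    · intro n
      rw [hH_real, hgy n]
  have hgG : ∀ x : ℝ, x ∈ Set.Icc (0:ℝ) 1 → g x = G := by
    intro x hx
    have h1 : H (x:ℂ) = (((G^2 : ℝ)):ℂ) := hHeq (hmem x hx)
    rw [hH_real] at h1
    have h2 : (g x)^2 = G^2 := by exact_mod_cast h1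
    nlinarith [hg_nonneg x hx.1, hGpos, h2]
  -- exact norms everywhere; work at x = 0
  have h0mem : (0:ℝ) ∈ Set.Icc (0:ℝ) 1 := ⟨le_rfl, zero_le_one⟩
  have hfy1 : ∀ x : ℝ, x ∈ Set.Icc (0:ℝ) 1 → ‖f (x:ℂ)‖ = G * (1 + x)⁻¹ := by
    intro x hx
    have h1 := hgG x hx
    simp only [hgdef] at h1
    have h2 : (0:ℝ) < 1 + x := by linarith [hx.1]
    field_simp at h1 ⊢
    linarith
  have hnorm_exact : ∀ n : ℕ, ‖a 0 n‖ = G * ((0 + (n:ℝ) + 1) * (0 + (n:ℝ) + 2))⁻¹ := by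
    intro n
    have hw := hwpos 0 le_rfl n
    have hw2 : (0:ℝ) < 0 + (n:ℝ) + 2 := by positivity
    rw [hnorm_a 0 le_rfl n]
    have h1' : ‖f (1 / (((0:ℝ):ℂ) + (n:ℂ) + 1))‖ = G * (1 + (0 + (n:ℝ) + 1)⁻¹)⁻¹ := by
      rw [← hcast 0 n]
      exact hfy1 _ (hy_mem 0 le_rfl n)
    rw [h1']
    rw [show (1 + (0 + (n:ℝ) + 1)⁻¹) = (0 + (n:ℝ) + 2) * (0 + (n:ℝ) + 1)⁻¹ by field_simp; ring]
    field_simp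
  set S : ℂ := lam * f (((0:ℝ)):ℂ) with hSdef
  have hSnorm : ‖S‖ = G := by
    rw [hSdef, norm_mul, hlam1, one_mul, hfy1 0 h0mem]
    norm_num
  have hSne : S ≠ 0 := by
    intro hcon
    rw [hcon, norm_zero] at hSnorm
    exact (ne_of_gt hGpos) hSnorm.symm
  have hHasSum : HasSum (a 0) S := by
    have := (hsummable 0 h0mem).hasSum
    rwa [heig' 0 h0mem] at this
  have htsum_norm_eq : ∑' n, ‖a 0 n‖ = ‖S‖ := by
    rw [tsum_congr hnorm_exact, tsum_mul_left, (hasSum_tele 0 le_rfl).tsum_eq, hSnorm]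
    norm_num
  have halign : ∀ n : ℕ, a 0 n * (‖a 0 0‖ : ℝ) = a 0 0 * (‖a 0 n‖ : ℝ) :=
    fun n => tsum_triangle_align hHasSum htsum_norm_eq hSne n 0
  -- clean relation
  have hGneC : ((G:ℝ):ℂ) ≠ 0 := Complex.ofReal_ne_zero.mpr (ne_of_gt hGpos)
  have hrel : ∀ n : ℕ, a 0 n * (((n:ℂ)+1) * ((n:ℂ)+2)) = a 0 0 * 2 := by
    intro n
    have h := halign n
    rw [hnorm_exact n, hnorm_exact 0] at h
    have hn1 : ((n:ℂ)+1) ≠ 0 := by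
      intro hcon
      have : ((n:ℝ)+1) = 0 := by exact_mod_cast hcon
      nlinarith [(Nat.cast_nonneg n : (0:ℝ) ≤ n)]
    have hn2 : ((n:ℂ)+2) ≠ 0 := by
      intro hcon
      have : ((n:ℝ)+2) = 0 := by exact_mod_cast hcon
      nlinarith [(Nat.cast_nonneg n : (0:ℝ) ≤ n)]
    push_cast at h
    field_simp at h
    have h2 : a 0 n * ((↑n + 1) * (↑n + 2)) * (G:ℂ) = a 0 0 * 2 * (G:ℂ) := by
      rw [eq_div_iff (by simpa using hn2)] at h
      linear_combination (G:ℂ) * h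
    exact mul_right_cancel₀ hGneC h2
  -- split the exponential
  have hsplitexp : ∀ r : ℝ, Complex.exp (-(2 * (1 + (t:ℂ) * Complex.I)) * (r:ℂ))
      = ((Real.exp (-(2*r)) : ℝ) : ℂ) * Complex.exp (((-(2*t)*r : ℝ) : ℂ) * Complex.I) := by
    intro r
    rw [Complex.ofReal_exp, ← Complex.exp_add]
    congr 1
    push_cast
    ring
  have hexpval : ∀ w : ℝ, 0 < w → Real.exp (-(2 * Real.log w)) = (w * w)⁻¹ := by
    intro w hw
    rw [show -(2 * Real.log w) = -(Real.log w + Real.log w) by ring,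
      Real.exp_neg, Real.exp_add, Real.exp_log hw, mul_inv]
  set E : ℕ → ℂ := fun n => Complex.exp (((-(2*t) * Real.log ((n:ℝ)+1) : ℝ) : ℂ) * Complex.I)
    with hEdef
  have ha0n : ∀ n : ℕ, a 0 n
      = (((((n:ℝ)+1) * ((n:ℝ)+1))⁻¹ : ℝ) : ℂ) * E n * f (1/((n:ℂ)+1)) := by
    intro n
    show Complex.exp (-(2 * (1 + (t:ℂ) * Complex.I)) * ((Real.log ((0:ℝ) + n + 1) : ℝ) : ℂ))
        * f (1 / (((0:ℝ):ℂ) + n + 1)) = _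
    rw [show ((0:ℝ) + (n:ℝ) + 1) = ((n:ℝ)+1) by ring,
      show (((0:ℝ):ℂ) + (n:ℂ) + 1) = ((n:ℂ)+1) by push_cast; ring,
      hsplitexp (Real.log ((n:ℝ)+1)), hexpval ((n:ℝ)+1) (by positivity), hEdef]
  have hfne2 : ∀ n : ℕ, f (1/((n:ℂ)+1)) ≠ 0 := by
    intro n hcon
    have hmemn : (((n:ℝ)+1)⁻¹ : ℝ) ∈ Set.Icc (0:ℝ) 1 := by
      constructor
      · positivity
      · rw [inv_le_one_iff₀]; right; linarith [(Nat.cast_nonneg n : (0:ℝ) ≤ n)]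
    have hcast2 : ((((n:ℝ)+1)⁻¹ : ℝ) : ℂ) = 1/((n:ℂ)+1) := by push_cast; rw [one_div]
    have := hfy1 _ hmemn
    rw [hcast2, hcon, norm_zero] at this
    have h2 : (0:ℝ) < G * (1 + ((n:ℝ)+1)⁻¹)⁻¹ := by positivity
    rw [← this] at h2
    exact lt_irrefl _ h2
  have hE : ∀ n : ℕ, E n
      = a 0 0 * 2 * (((n:ℂ)+1) * ((n:ℂ)+2)⁻¹) * (f (1/((n:ℂ)+1)))⁻¹ := by
    intro n
    have h := hrel n
    rw [ha0n n] at h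
    have hn1 : ((n:ℂ)+1) ≠ 0 := by
      intro hcon
      have : ((n:ℝ)+1) = 0 := by exact_mod_cast hcon
      nlinarith [(Nat.cast_nonneg n : (0:ℝ) ≤ n)]
    have hn2 : ((n:ℂ)+2) ≠ 0 := by
      intro hcon
      have : ((n:ℝ)+2) = 0 := by exact_mod_cast hcon
      nlinarith [(Nat.cast_nonneg n : (0:ℝ) ≤ n)]
    obtain ⟨A0, hA00⟩ : ∃ c, a 0 0 = c := ⟨_, rfl⟩
    rw [hA00] at h ⊢
    push_cast at h
    field_simp at h
    apply mul_right_cancel₀ (show (f (1/((n:ℂ)+1)) * (((n:ℂ)+1)*((n:ℂ)+2))) ≠ 0 from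
      mul_ne_zero (hfne2 n) (mul_ne_zero hn1 hn2))
    calc E n * (f (1/((n:ℂ)+1)) * (((n:ℂ)+1)*((n:ℂ)+2)))
        = E n * f (1/((n:ℂ)+1)) * (((n:ℂ)+1)*((n:ℂ)+2)) := by ring
      _ = A0 * 2 * (((n:ℂ)+1)*((n:ℂ)+1)) := by linear_combination ((n:ℂ)+1) * h
      _ = A0 * 2 * (((n:ℂ)+1) * ((n:ℂ)+2)⁻¹) * (f (1/((n:ℂ)+1)))⁻¹
          * (f (1/((n:ℂ)+1)) * (((n:ℂ)+1)*((n:ℂ)+2))) := by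
          have e1 : ((n:ℂ)+2)⁻¹ * ((n:ℂ)+2) = 1 := inv_mul_cancel₀ hn2
          have e2 : (f (1/((n:ℂ)+1)))⁻¹ * f (1/((n:ℂ)+1)) = 1 := inv_mul_cancel₀ (hfne2 n)
          linear_combination (-(A0*2*((n:ℂ)+1)^2*(((n:ℂ)+2)⁻¹*((n:ℂ)+2)))) * e2
            + (-(A0*2*((n:ℂ)+1)^2)) * e1
  -- the limit of the right-hand side
  have h0disc : (0:ℂ) ∈ gaussDisc := by
    have := mem_gaussDisc_of_real (le_refl (0:ℝ)) zero_le_one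
    rwa [Complex.ofReal_zero] at this
  have hf0ne : f 0 ≠ 0 := by
    intro hcon
    have := hfy1 0 h0mem
    rw [Complex.ofReal_zero, hcon, norm_zero] at this
    have h2 : (0:ℝ) < G * (1 + (0:ℝ))⁻¹ := by positivity
    rw [← this] at h2
    exact lt_irrefl _ h2
  have hB : Tendsto (fun n : ℕ => f (1/((n:ℂ)+1))) atTop (𝓝 (f 0)) := by
    have hcont : ContinuousAt f 0 :=
      (hf_holo.differentiableAt (isOpen_gaussDisc.mem_nhds h0disc)).continuousAt
    apply hcont.tendsto.comp
    have hreal : Tendsto (fun n : ℕ => (((n:ℝ)+1)⁻¹ : ℝ)) atTop (𝓝 0) :=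
      Tendsto.inv_tendsto_atTop (tendsto_atTop_add_const_right _ _ tendsto_natCast_atTop_atTop)
    have := (Complex.continuous_ofReal.tendsto 0).comp hreal
    apply this.congr
    intro n
    simp only [Function.comp]
    push_cast
    rw [one_div]
  have hA : Tendsto (fun n : ℕ => ((n:ℂ)+1) * ((n:ℂ)+2)⁻¹) atTop (𝓝 1) := by
    have hreal : Tendsto (fun n : ℕ => ((n:ℝ)+1) * ((n:ℝ)+2)⁻¹) atTop (𝓝 1) := by
      have h1 : ∀ n : ℕ, ((n:ℝ)+1) * ((n:ℝ)+2)⁻¹ = 1 - ((n:ℝ)+2)⁻¹ := by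
        intro n
        have : ((n:ℝ)+2) ≠ 0 := by positivity
        field_simp
        ring
      rw [tendsto_congr h1]
      have h2 : Tendsto (fun n : ℕ => ((n:ℝ)+2)⁻¹) atTop (𝓝 0) :=
        Tendsto.inv_tendsto_atTop (tendsto_atTop_add_const_right _ _ tendsto_natCast_atTop_atTop)
      simpa using tendsto_const_nhds.sub h2
    have := (Complex.continuous_ofReal.tendsto 1).comp hreal
    apply Tendsto.congr' _ (by simpa using this)
    filter_upwards with n
    simp only [Function.comp]
    push_cast
    ring
  have hRlim : Tendsto (fun n : ℕ => a 0 0 * 2 * (((n:ℂ)+1) * ((n:ℂ)+2)⁻¹)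
      * (f (1/((n:ℂ)+1)))⁻¹) atTop (𝓝 (a 0 0 * 2 * 1 * (f 0)⁻¹)) :=
    (Tendsto.mul (tendsto_const_nhds.mul hA) (hB.inv₀ hf0ne))
  have hElim : Tendsto E atTop (𝓝 (a 0 0 * 2 * 1 * (f 0)⁻¹)) := by
    rw [tendsto_congr hE]
    exact hRlim
  have hbne : -(2*t) ≠ 0 := by
    intro hcon
    apply ht
    linarith
  exact no_conv (-(2*t)) hbne _ hElim
end
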